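/- Let (X, μ) be a σ-finite measure space, let f : ℝ → X → ℝ be such that (s,x) ↦ f s x is measurable, let 0 ≤ a < b < ∞ and 2 ≤ p < 6, and set α := (6−p)/4 and β := (p−2)/4 (so that p = 2α + 6β and α + β = 1 with 0 ≤ β < 1). Then, with all s-integrals taken as lower Lebesgue integrals over (a,b) with values in ℝ≥0∞, ∫ₐᵇ ‖f(s)‖_p ds ≤ (∫ₐᵇ s^(3/p − 3/2) ds)^(1/2) · (∫ₐᵇ ‖f(s)‖₂² ds)^(α/p) · (∫ₐᵇ s·‖f(s)‖₆² ds)^(3β/p). (This is Lemma 6.5, the interpolation lemma used to prove the L⁴-in-time integrability of A′ in Corollary 7.2.) -/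

import Mathlib

open MeasureTheory ENNReal

lemma interp_aux {X : Type*} [MeasurableSpace X] (μ : Measure X)
    (g : X → ℝ) (hg : Measurable g)
    (p α β : ℝ) (hp2 : 2 ≤ p) (hp6 : p < 6) (hα : α = (6 - p) / 4) (hβ : β = (p - 2) / 4) :
    eLpNorm g (ENNReal.ofReal p) μ ≤
      (eLpNorm g 2 μ ^ (2 : ℝ)) ^ (α / p) * (eLpNorm g 6 μ ^ (2 : ℝ)) ^ (3 * β / p) := by
  have hp0 : (0:ℝ) < p := by linarith
  have hα0 : 0 ≤ α := by rw [hα]; linarith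
  have hβ0 : 0 ≤ β := by rw [hβ]; linarith
  have hαβ : α + β = 1 := by rw [hα, hβ]; ring
  have h2 : (2:ℝ≥0∞) ≠ 0 := by norm_num
  have h2t : (2:ℝ≥0∞) ≠ ⊤ := by norm_num
  have h6 : (6:ℝ≥0∞) ≠ 0 := by norm_num
  have h6t : (6:ℝ≥0∞) ≠ ⊤ := by norm_num
  rw [eLpNorm_eq_lintegral_rpow_enorm_toReal (ENNReal.ofReal_pos.mpr hp0).ne' ENNReal.ofReal_ne_top,
    eLpNorm_eq_lintegral_rpow_enorm_toReal h2 h2t, eLpNorm_eq_lintegral_rpow_enorm_toReal h6 h6t,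
    ENNReal.toReal_ofReal hp0.le]
  simp only [enorm_eq_nnnorm]
  set I2 := ∫⁻ x, (‖g x‖₊ : ℝ≥0∞) ^ ((2:ℝ≥0∞).toReal) ∂μ with hI2
  set I6 := ∫⁻ x, (‖g x‖₊ : ℝ≥0∞) ^ ((6:ℝ≥0∞).toReal) ∂μ with hI6
  have key : ∫⁻ x, (‖g x‖₊ : ℝ≥0∞) ^ p ∂μ ≤ I2 ^ α * I6 ^ β := by
    have h := ENNReal.lintegral_mul_norm_pow_le
      (f := fun x => (‖g x‖₊ : ℝ≥0∞) ^ ((2:ℝ≥0∞).toReal))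
      (g := fun x => (‖g x‖₊ : ℝ≥0∞) ^ ((6:ℝ≥0∞).toReal))
      (μ := μ) ((hg.nnnorm.coe_nnreal_ennreal.pow_const _).aemeasurable)
      ((hg.nnnorm.coe_nnreal_ennreal.pow_const _).aemeasurable) hα0 hβ0 hαβ
    refine le_trans (le_of_eq ?_) h
    congr 1; funext x
    rw [← ENNReal.rpow_mul, ← ENNReal.rpow_mul, ← ENNReal.rpow_add_of_nonneg _ _
      (by positivity) (by positivity)]
    congr 1
    simp only [ENNReal.toReal_ofNat]
    rw [hα, hβ]; ring
  have h1 := ENNReal.rpow_le_rpow key (le_of_lt (by positivity : (0:ℝ) < 1/p))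
  refine le_trans h1 (le_of_eq ?_)
  rw [ENNReal.mul_rpow_of_nonneg _ _ (by positivity),
    ← ENNReal.rpow_mul I2, ← ENNReal.rpow_mul I6,
    ← ENNReal.rpow_mul I2, ← ENNReal.rpow_mul I6,
    ← ENNReal.rpow_mul I2, ← ENNReal.rpow_mul I6]
  simp only [ENNReal.toReal_ofNat]
  congr 2 <;> field_simp <;> ring

lemma meas_eLpNorm_aux {X : Type*} [MeasurableSpace X] (μ : Measure X) [SigmaFinite μ]
    (f : ℝ → X → ℝ) (hf : Measurable (Function.uncurry f))
    (q : ℝ≥0∞) (hq0 : q ≠ 0) (hqt : q ≠ ⊤) :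
    Measurable fun s => eLpNorm (f s) q μ := by
  simp_rw [eLpNorm_eq_lintegral_rpow_enorm_toReal hq0 hqt]
  refine Measurable.pow_const ?_ _
  exact Measurable.lintegral_prod_right'
    ((hf.nnnorm.coe_nnreal_ennreal).pow_const _)

/-- Lemma 6.5 (interpolation): for `0 ≤ a < b < ∞`, `2 ≤ p < 6`, `α = (6-p)/4`,
`β = (p-2)/4`,
`∫ₐᵇ ‖f(s)‖_p ds ≤ (∫ₐᵇ s^{3/p - 3/2} ds)^{1/2} (∫ₐᵇ ‖f(s)‖₂² ds)^{α/p}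
  (∫ₐᵇ s ‖f(s)‖₆² ds)^{3β/p}`. -/
theorem stmt_4 {X : Type*} [MeasurableSpace X] (μ : Measure X) [SigmaFinite μ]
    (f : ℝ → X → ℝ) (hf : Measurable (Function.uncurry f))
    (a b p : ℝ) (ha : 0 ≤ a) (hab : a < b) (hp2 : 2 ≤ p) (hp6 : p < 6)
    (α β : ℝ) (hα : α = (6 - p) / 4) (hβ : β = (p - 2) / 4) :
    ∫⁻ s in Set.Ioo a b, eLpNorm (f s) (ENNReal.ofReal p) μ ≤
      (∫⁻ s in Set.Ioo a b, ENNReal.ofReal (s ^ (3 / p - 3 / 2))) ^ ((1 : ℝ)/2) *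
      (∫⁻ s in Set.Ioo a b, eLpNorm (f s) 2 μ ^ (2 : ℝ)) ^ (α / p) *
      (∫⁻ s in Set.Ioo a b,
          ENNReal.ofReal s * eLpNorm (f s) 6 μ ^ (2 : ℝ)) ^ (3 * β / p) := by
  have hp0 : (0:ℝ) < p := by linarith
  have hβ0 : 0 ≤ β := by rw [hβ]; linarith
  have hα0 : 0 ≤ α := by rw [hα]; linarith
  set F1 : ℝ → ℝ≥0∞ := fun s => ENNReal.ofReal (s ^ (3 / p - 3 / 2)) with hF1
  set F2 : ℝ → ℝ≥0∞ := fun s => eLpNorm (f s) 2 μ ^ (2 : ℝ) with hF2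
  set F3 : ℝ → ℝ≥0∞ := fun s => ENNReal.ofReal s * eLpNorm (f s) 6 μ ^ (2 : ℝ) with hF3
  have hmF1 : Measurable F1 := (measurable_id.pow_const _).ennreal_ofReal
  have hmF2 : Measurable F2 :=
    (meas_eLpNorm_aux μ f hf 2 (by norm_num) (by norm_num)).pow_const _
  have hmF3 : Measurable F3 :=
    ENNReal.measurable_ofReal.mul
      ((meas_eLpNorm_aux μ f hf 6 (by norm_num) (by norm_num)).pow_const _)
  have hpt : ∀ s ∈ Set.Ioo a b, eLpNorm (f s) (ENNReal.ofReal p) μ ≤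
      F1 s ^ ((1:ℝ)/2) * F2 s ^ (α / p) * F3 s ^ (3 * β / p) := by
    intro s hs
    have hs0 : 0 < s := lt_of_le_of_lt ha hs.1
    have hone : F1 s ^ ((1:ℝ)/2) * (ENNReal.ofReal s) ^ (3 * β / p) = 1 := by
      rw [hF1]
      rw [ENNReal.ofReal_rpow_of_pos (Real.rpow_pos_of_pos hs0 _),
        ENNReal.ofReal_rpow_of_pos hs0, ← Real.rpow_mul hs0.le,
        ← ENNReal.ofReal_mul (by positivity), ← Real.rpow_add hs0]
      have : (3 / p - 3 / 2) * ((1:ℝ)/2) + 3 * β / p = 0 := by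
        rw [hβ]; field_simp; ring
      rw [this, Real.rpow_zero, ENNReal.ofReal_one]
    calc eLpNorm (f s) (ENNReal.ofReal p) μ
        ≤ F2 s ^ (α / p) * (eLpNorm (f s) 6 μ ^ (2:ℝ)) ^ (3 * β / p) :=
          interp_aux μ (f s) (hf.of_uncurry_left) p α β hp2 hp6 hα hβ
      _ = F1 s ^ ((1:ℝ)/2) * F2 s ^ (α / p) * F3 s ^ (3 * β / p) := by
          rw [hF3]
          simp only
          rw [ENNReal.mul_rpow_of_nonneg _ _ (by positivity)]
          calc F2 s ^ (α / p) * (eLpNorm (f s) 6 μ ^ (2:ℝ)) ^ (3 * β / p)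
              = (F1 s ^ ((1:ℝ)/2) * (ENNReal.ofReal s) ^ (3 * β / p)) *
                (F2 s ^ (α / p) * (eLpNorm (f s) 6 μ ^ (2:ℝ)) ^ (3 * β / p)) := by
                rw [hone, one_mul]
            _ = F1 s ^ ((1:ℝ)/2) * F2 s ^ (α / p) *
                ((ENNReal.ofReal s) ^ (3 * β / p) *
                  (eLpNorm (f s) 6 μ ^ (2:ℝ)) ^ (3 * β / p)) := by ring
  calc ∫⁻ s in Set.Ioo a b, eLpNorm (f s) (ENNReal.ofReal p) μ
      ≤ ∫⁻ s in Set.Ioo a b, F1 s ^ ((1:ℝ)/2) * F2 s ^ (α / p) * F3 s ^ (3 * β / p) :=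
        setLIntegral_mono
          (((hmF1.pow_const _).mul (hmF2.pow_const _)).mul (hmF3.pow_const _)) hpt
    _ ≤ (∫⁻ s in Set.Ioo a b, F1 s) ^ ((1:ℝ)/2) * (∫⁻ s in Set.Ioo a b, F2 s) ^ (α / p) *
        (∫⁻ s in Set.Ioo a b, F3 s) ^ (3 * β / p) := by
        have h := ENNReal.lintegral_mul_prod_norm_pow_le (μ := volume.restrict (Set.Ioo a b))
          (Finset.univ : Finset (Fin 2)) (g := F1) (f := ![F2, F3])
          hmF1.aemeasurable
          (by intro i _; fin_cases i <;> [exact hmF2.aemeasurable; exact hmF3.aemeasurable])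
          ((1:ℝ)/2) (p := ![α / p, 3 * β / p])
          (by simp [Fin.sum_univ_two, hα, hβ]; field_simp; ring)
          (by norm_num)
          (by intro i _; fin_cases i <;> simp <;> positivity)
        simpa [Fin.prod_univ_two, mul_assoc] using h
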